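/- Let A be a right strongly semiprime ring and X a right A-module. If there exists an essential right ideal B of A such that X is injective with respect to the module B_A, then X is an injective module. -/
import Mathlib


open MulOpposite

open MulOpposite

/-- The right annihilator `r(x) = {a : A | x·a = 0}` of an element `x` of a right `A`-module `X`,
as a right ideal of `A`. -/
def rightAnn (A : Type*) [Ring A] {X : Type*} [AddCommGroup X] [Module Aᵐᵒᵖ X]
    (x : X) : Submodule Aᵐᵒᵖ A where
  carrier := {a : A | op a • x = 0}
  add_mem' := by
    intro a b ha hb
    simp only [Set.mem_setOf_eq] at *
    rw [op_add, add_smul, ha, hb, add_zero]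
  zero_mem' := by simp
  smul_mem' := by
    intro c a ha
    simp only [Set.mem_setOf_eq] at *
    have h1 : c • a = a * c.unop := rfl
    rw [h1]
    have h2 : op (a * c.unop) = c * op a := by
      simp [MulOpposite.op_mul]
    rw [h2, mul_smul, ha, smul_zero]

/-- A right ideal `B` of `A` is essential if it has non-zero intersection with every
non-zero right ideal of `A`. -/
def IsEssentialRightIdeal (A : Type*) [Ring A] (B : Submodule Aᵐᵒᵖ A) : Prop :=
  ∀ C : Submodule Aᵐᵒᵖ A, C ≠ ⊥ → B ⊓ C ≠ ⊥

/-- A right `A`-module `X` is non-singular if its singular submodule is zero, i.e. the only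
element of `X` whose right annihilator is an essential right ideal of `A` is `0`. -/
def IsNonsingularMod (A : Type*) [Ring A] (X : Type*) [AddCommGroup X] [Module Aᵐᵒᵖ X] : Prop :=
  ∀ x : X, IsEssentialRightIdeal A (rightAnn A x) → x = 0

/-- The Goldie radical (second singular submodule) `G(X)` of a right `A`-module `X`: the
intersection of all submodules `Y ⊆ X` such that `X/Y` is non-singular. -/
def goldieRadical (A : Type*) [Ring A] (X : Type*) [AddCommGroup X] [Module Aᵐᵒᵖ X] :
    Submodule Aᵐᵒᵖ X :=
  sInf {Y : Submodule Aᵐᵒᵖ X | IsNonsingularMod A (X ⧸ Y)}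

/-- A module `X` is injective with respect to a module `Y` (`Y`-injective) if every homomorphism
from a submodule of `Y` to `X` extends to a homomorphism `Y → X`. -/
def IsInjectiveWrt (R : Type*) [Ring R] (X : Type*) [AddCommGroup X] [Module R X]
    (Y : Type*) [AddCommGroup Y] [Module R Y] : Prop :=
  ∀ (Y₁ : Submodule R Y) (f : Y₁ →ₗ[R] X), ∃ g : Y →ₗ[R] X, ∀ y : Y₁, g y = f y

/-- A ring `A` is right strongly semiprime if every two-sided ideal of `A` which is essential
as a right ideal contains a finite subset with zero right annihilator. -/
def IsRightStronglySemiprime (A : Type*) [Ring A] : Prop :=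
  ∀ T : TwoSidedIdeal A,
    (∀ C : Submodule Aᵐᵒᵖ A, C ≠ ⊥ → ∃ x ∈ C, x ≠ 0 ∧ x ∈ T) →
    ∃ K : Finset A, (K : Set A) ⊆ (T : Set A) ∧ ∀ a : A, (∀ k ∈ K, k * a = 0) → a = 0

section Aux

/-- In a right strongly semiprime ring, every essential right ideal contains a finite
subset with zero right annihilator. -/
lemma exists_finset_ann {A : Type*} [Ring A] (hA : IsRightStronglySemiprime A)
    (B : Submodule Aᵐᵒᵖ A) (hBess : IsEssentialRightIdeal A B) :
    ∃ S : Finset A, (S : Set A) ⊆ (B : Set A) ∧ ∀ c : A, (∀ b ∈ S, b * c = 0) → c = 0 := by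
  classical
  -- the two-sided ideal generated by `B` : its carrier is the left `A`-span of `B`.
  set sp : Submodule A A := Submodule.span A (B : Set A) with hsp
  have hmul_right : ∀ {x y : A}, x ∈ sp → x * y ∈ sp := by
    intro x y hx
    refine Submodule.span_induction (p := fun x _ => x * y ∈ sp) ?_ ?_ ?_ ?_ hx
    · intro b hb
      exact Submodule.subset_span (B.smul_mem (op y) hb)
    · simpa using sp.zero_mem
    · intro a b _ _ ha hb
      simpa [add_mul] using sp.add_mem ha hb
    · intro a x _ hx'
      have : (a • x) * y = a • (x * y) := by
        simp [smul_eq_mul, mul_assoc]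
      rw [this]
      exact sp.smul_mem a hx'
  let T : TwoSidedIdeal A := TwoSidedIdeal.mk' (sp : Set A) sp.zero_mem
    (fun hx hy => sp.add_mem hx hy) (fun hx => sp.neg_mem hx)
    (fun {x y} hy => sp.smul_mem x hy) (fun {x y} hx => hmul_right hx)
  have hTmem : ∀ z : A, z ∈ T ↔ z ∈ sp := by
    intro z
    simp [T, TwoSidedIdeal.mem_mk']
  obtain ⟨K, hK1, hK2⟩ := hA T (by
    intro C hC
    obtain ⟨x, hx, hx0⟩ := (B ⊓ C).ne_bot_iff.mp (hBess C hC)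
    exact ⟨x, hx.2, hx0, (hTmem x).mpr (Submodule.subset_span hx.1)⟩)
  -- for each `k ∈ K` choose a finite subset of `B` whose span contains `k`
  have hKsp : ∀ k : A, k ∈ K → ∃ F : Finset A, (F : Set A) ⊆ (B : Set A) ∧
      k ∈ Submodule.span A (F : Set A) := by
    intro k hk
    have : k ∈ sp := (hTmem k).mp (hK1 hk)
    exact Submodule.mem_span_finite_of_mem_span this
  choose F hF1 hF2 using hKsp
  refine ⟨K.attach.biUnion (fun k => F k.1 k.2), ?_, ?_⟩
  · intro b hb
    simp only [Finset.coe_biUnion, Set.mem_iUnion] at hb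
    obtain ⟨k, _, hbk⟩ := hb
    exact hF1 k.1 k.2 hbk
  · intro c hc
    refine hK2 c (fun k hk => ?_)
    -- `{y | y * c = 0}` is a left submodule containing `F k`
    let Z : Submodule A A :=
      { carrier := {y : A | y * c = 0}
        add_mem' := by
          intro a b ha hb
          simp only [Set.mem_setOf_eq] at *
          rw [add_mul, ha, hb, add_zero]
        zero_mem' := by simp
        smul_mem' := by
          intro a y hy
          simp only [Set.mem_setOf_eq] at *
          rw [smul_eq_mul, mul_assoc, hy, mul_zero] }
    have hFZ : (F k hk : Set A) ⊆ (Z : Set A) := by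
      intro b hb
      have : b ∈ K.attach.biUnion (fun k => F k.1 k.2) :=
        Finset.mem_biUnion.mpr ⟨⟨k, hk⟩, Finset.mem_attach _ _, hb⟩
      exact hc b this
    have : k ∈ Z := Submodule.span_le.mpr hFZ (hF2 k hk)
    exact this

variable {R : Type*} [Ring R] {X : Type*} [AddCommGroup X] [Module R X]

lemma isInjectiveWrt_of_subsingleton {Y : Type*} [AddCommGroup Y] [Module R Y]
    [Subsingleton Y] : IsInjectiveWrt R X Y := by
  intro W f
  refine ⟨0, fun y => ?_⟩
  have : y = 0 := Subsingleton.elim _ _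
  rw [this]
  simp

lemma isInjectiveWrt_equiv {Y Y' : Type*} [AddCommGroup Y] [Module R Y]
    [AddCommGroup Y'] [Module R Y'] (e : Y ≃ₗ[R] Y')
    (h : IsInjectiveWrt R X Y) : IsInjectiveWrt R X Y' := by
  intro W' f
  let W : Submodule R Y := W'.comap (e : Y →ₗ[R] Y')
  let j : W →ₗ[R] W' :=
    { toFun := fun w => ⟨e w.1, w.2⟩
      map_add' := fun a b => by ext; simp
      map_smul' := fun c a => by ext; simp }
  obtain ⟨g, hg⟩ := h W (f ∘ₗ j)
  refine ⟨g ∘ₗ (e.symm : Y' →ₗ[R] Y), fun w' => ?_⟩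
  have hmem : e.symm w'.1 ∈ W := by
    simp only [W, Submodule.mem_comap, LinearEquiv.coe_coe, LinearEquiv.apply_symm_apply]
    exact w'.2
  have := hg ⟨e.symm w'.1, hmem⟩
  simp only [LinearMap.coe_comp, Function.comp_apply, LinearEquiv.coe_coe] at this ⊢
  rw [this]
  congr 1
  ext
  simp [j]

lemma isInjectiveWrt_prod {Y₁ Y₂ : Type*} [AddCommGroup Y₁] [Module R Y₁]
    [AddCommGroup Y₂] [Module R Y₂]
    (h1 : IsInjectiveWrt R X Y₁) (h2 : IsInjectiveWrt R X Y₂) :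
    IsInjectiveWrt R X (Y₁ × Y₂) := by
  intro W f
  -- extend `f` restricted to `W ∩ ({0} × Y₂)` to all of `Y₂`
  let W₂ : Submodule R Y₂ := W.comap (LinearMap.inr R Y₁ Y₂)
  let j : W₂ →ₗ[R] W :=
    { toFun := fun y => ⟨(0, y.1), y.2⟩
      map_add' := fun a b => by ext <;> simp
      map_smul' := fun c a => by ext <;> simp }
  obtain ⟨g₂, hg₂⟩ := h2 W₂ (f ∘ₗ j)
  -- correct `f` so that it vanishes on `W ∩ ({0} × Y₂)`
  let f' : W →ₗ[R] X := f - g₂ ∘ₗ (LinearMap.snd R Y₁ Y₂) ∘ₗ W.subtype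
  let p : W →ₗ[R] Y₁ := (LinearMap.fst R Y₁ Y₂) ∘ₗ W.subtype
  have hker : LinearMap.ker p ≤ LinearMap.ker f' := by
    intro w hw
    have hw1 : w.1.1 = 0 := hw
    have hmem : w.1.2 ∈ W₂ := by
      have : ((0 : Y₁), w.1.2) = w.1 := by
        rw [← hw1]
      simpa only [W₂, Submodule.mem_comap, LinearMap.coe_inr, this] using w.2
    have hjw : j ⟨w.1.2, hmem⟩ = w := by
      ext
      · simp [j, hw1]
      · simp [j]
    have := hg₂ ⟨w.1.2, hmem⟩
    simp only [LinearMap.coe_comp, Function.comp_apply, hjw] at this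
    simp only [LinearMap.mem_ker, f', LinearMap.sub_apply, LinearMap.coe_comp,
      Function.comp_apply, Submodule.coe_subtype, LinearMap.snd_apply]
    rw [← this, sub_self]
  -- factor `f'` through the image of `W` in `Y₁` and extend to `Y₁`
  let f'' := Submodule.liftQ (LinearMap.ker p) f' hker
  let e := p.quotKerEquivRange
  obtain ⟨g₁, hg₁⟩ := h1 (LinearMap.range p) (f'' ∘ₗ (e.symm : _ →ₗ[R] _))
  refine ⟨g₁ ∘ₗ LinearMap.fst R Y₁ Y₂ + g₂ ∘ₗ LinearMap.snd R Y₁ Y₂, fun w => ?_⟩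
  have hmem : w.1.1 ∈ LinearMap.range p := ⟨w, rfl⟩
  have key : g₁ w.1.1 = f' w := by
    have h1' := hg₁ ⟨w.1.1, hmem⟩
    have he : (⟨w.1.1, hmem⟩ : LinearMap.range p)
        = e (Submodule.Quotient.mk w) := by
      ext
      show w.1.1 = _
      simp [e, p, LinearMap.quotKerEquivRange_apply_mk]
    rw [he] at h1'
    simp only [LinearMap.coe_comp, Function.comp_apply, LinearEquiv.coe_coe,
      LinearEquiv.symm_apply_apply] at h1'
    have hc : ((e (Submodule.Quotient.mk w) : ↥(LinearMap.range p)) : Y₁) = w.1.1 := by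
      simp [e, p, LinearMap.quotKerEquivRange_apply_mk]
    rw [hc] at h1'
    rw [h1']
    exact Submodule.liftQ_apply _ _ _
  simp only [LinearMap.add_apply, LinearMap.coe_comp, Function.comp_apply,
    LinearMap.fst_apply, LinearMap.snd_apply]
  rw [key]
  simp only [f', LinearMap.sub_apply, LinearMap.coe_comp, Function.comp_apply,
    Submodule.coe_subtype, LinearMap.snd_apply]
  abel

/-- `(Fin (n+1) → Y) ≃ Y × (Fin n → Y)` as modules. -/
def finSuccPiEquiv (R Y : Type*) [Ring R] [AddCommGroup Y] [Module R Y] (n : ℕ) :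
    (Fin (n + 1) → Y) ≃ₗ[R] Y × (Fin n → Y) where
  toFun f := (f 0, fun i => f i.succ)
  map_add' f g := rfl
  map_smul' c f := rfl
  invFun q := Fin.cons q.1 q.2
  left_inv f := by
    funext i
    refine Fin.cases ?_ (fun j => ?_) i
    · exact Fin.cons_zero _ _
    · exact Fin.cons_succ _ _ _
  right_inv q := by
    refine Prod.ext (by simp) ?_
    funext j
    simp

lemma isInjectiveWrt_pi {Y : Type*} [AddCommGroup Y] [Module R Y]
    (h : IsInjectiveWrt R X Y) : ∀ n : ℕ, IsInjectiveWrt R X (Fin n → Y)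
  | 0 => by
    haveI : Subsingleton (Fin 0 → Y) := ⟨fun a b => funext fun i => i.elim0⟩
    exact isInjectiveWrt_of_subsingleton
  | (n + 1) =>
    isInjectiveWrt_equiv (finSuccPiEquiv R Y n).symm
      (isInjectiveWrt_prod h (isInjectiveWrt_pi h n))

end Aux

/-- Over a right strongly semiprime ring `A`, a module which is injective with
respect to some essential right ideal of `A` is injective. -/
theorem stmt8 (A : Type u) [Ring A] (hA : IsRightStronglySemiprime A)
    (X : Type v) [AddCommGroup X] [Module Aᵐᵒᵖ X]
    (B : Submodule Aᵐᵒᵖ A) (hBess : IsEssentialRightIdeal A B)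
    (hBinj : IsInjectiveWrt Aᵐᵒᵖ X ↥B) :
    Module.Injective Aᵐᵒᵖ X := by
  classical
  obtain ⟨S, hSB, hSann⟩ := exists_finset_ann hA B hBess
  set n := S.card with hn
  let eS := S.equivFin
  let b : Fin n → A := fun i => ((eS.symm i : S) : A)
  have hb : ∀ i, b i ∈ B := fun i => hSB (eS.symm i).2
  have hbann : ∀ c : A, (∀ i, b i * c = 0) → c = 0 := by
    intro c hc
    refine hSann c (fun s hs => ?_)
    have : b (eS ⟨s, hs⟩) = s := by simp [b]
    rw [← this]
    exact hc _
  have hpi : IsInjectiveWrt Aᵐᵒᵖ X (Fin n → ↥B) := isInjectiveWrt_pi hBinj n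
  refine Module.Baer.injective ?_
  intro I f
  -- embed `Aᵐᵒᵖ` into `(Fin n → B)` via `m ↦ (bᵢ · m)ᵢ`
  let ψ : Aᵐᵒᵖ →ₗ[Aᵐᵒᵖ] (Fin n → ↥B) :=
    { toFun := fun m => fun i => ⟨b i * m.unop, by
        have : b i * m.unop = m • (b i) := rfl
        rw [this]
        exact B.smul_mem m (hb i)⟩
      map_add' := fun m m' => by
        funext i
        ext
        simp [mul_add]
      map_smul' := fun c m => by
        funext i
        ext
        simp only [Pi.smul_apply, SetLike.val_smul, MulOpposite.unop_mul,
          RingHom.id_apply]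
        show b i * (unop m * unop c) = (b i * unop m) * unop c
        rw [mul_assoc] }
  have hψ : Function.Injective ψ := by
    intro m m' hmm
    have h0 : ψ (m - m') = 0 := by rw [map_sub, hmm, sub_self]
    have : ∀ i, b i * (m - m').unop = 0 := by
      intro i
      have := congrFun h0 i
      exact congrArg Subtype.val this
    have := hbann _ this
    have : m - m' = 0 := by
      rw [← MulOpposite.op_unop (m - m'), this, MulOpposite.op_zero]
    exact sub_eq_zero.mp this
  let e := Submodule.equivMapOfInjective ψ hψ I
  obtain ⟨g, hg⟩ := hpi (Submodule.map ψ I) (f ∘ₗ (e.symm : _ →ₗ[Aᵐᵒᵖ] _))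
  refine ⟨g ∘ₗ ψ, fun x hx => ?_⟩
  have hmem : ψ x ∈ Submodule.map ψ I := Submodule.mem_map_of_mem hx
  have h1 := hg ⟨ψ x, hmem⟩
  have he : e ⟨x, hx⟩ = ⟨ψ x, hmem⟩ := by
    ext
    simp [e, Submodule.coe_equivMapOfInjective_apply]
  have h2 : e.symm ⟨ψ x, hmem⟩ = ⟨x, hx⟩ := by
    rw [← he, LinearEquiv.symm_apply_apply]
  simp only [LinearMap.coe_comp, Function.comp_apply, LinearEquiv.coe_coe] at h1 ⊢
  rw [h1, h2]
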